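/- Let $U, V$ be Hilbert spaces, $T : U \to V'$ a bounded linear bijection, and define on $V$ the equivalent norm $|||v||| := \|T^* v\|_{U}$ (where $T^* : V \to U$ is the adjoint, identifying $U' \cong U$). Then with respect to the norms $\|\cdot\|_U$ on $U$ and $|||\cdot|||$ on $V$, the condition number of $T$ equals one: $\|T\|_{\mathcal{L}(U,V')} \cdot \|T^{-1}\|_{\mathcal{L}(V',U)} = 1$, i.e. $T$ is an isometry. -/

import Mathlib

/-- With the test space `V` renormed by `|||v||| := ‖T* v‖_U`, the operator
`T : U → V'` becomes an isometry (condition number one): for every `u`, the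
dual norm of `T u` with respect to `|||·|||`, i.e. the supremum of `T u v`
over the `|||·|||`-unit ball, equals `‖u‖_U`. Here `Tstar : V → U` realizes
the adjoint via the Riesz identification `U' ≅ U`. -/
theorem renormed_transport_is_isometry
    {U V : Type*} [NormedAddCommGroup U] [InnerProductSpace ℝ U] [CompleteSpace U]
    [NormedAddCommGroup V] [InnerProductSpace ℝ V] [CompleteSpace V]
    (T : U →L[ℝ] (V →L[ℝ] ℝ)) (hT : Function.Bijective T)
    (Tstar : V → U)
    (hadj : ∀ (u : U) (v : V), T u v = (inner ℝ (Tstar v) u : ℝ)) :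
    ∀ u : U, ‖u‖ = sSup {r : ℝ | ∃ v : V, ‖Tstar v‖ ≤ 1 ∧ r = T u v} := by
  intro u
  -- Tstar is additive and homogeneous
  have hadd : ∀ v w, Tstar (v + w) = Tstar v + Tstar w := by
    intro v w
    refine ext_inner_right ℝ fun x => ?_
    rw [inner_add_left, ← hadj, ← hadj, ← hadj, map_add]
  have hsmul : ∀ (c : ℝ) (v : V), Tstar (c • v) = c • Tstar v := by
    intro c v
    refine ext_inner_right ℝ fun x => ?_
    rw [inner_smul_left, ← hadj, ← hadj, map_smul]
    simp
  let L : V →ₗ[ℝ] U :=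
    { toFun := Tstar, map_add' := hadd, map_smul' := hsmul }
  have hzero : Tstar 0 = 0 := map_zero L
  -- the range of Tstar is dense
  have horth : (LinearMap.range L)ᗮ = ⊥ := by
    rw [Submodule.eq_bot_iff]
    intro x hx
    have hx0 : T x = 0 := by
      ext v
      have h1 := ((LinearMap.range L).mem_orthogonal x).mp hx (Tstar v) ⟨v, rfl⟩
      simpa [hadj] using h1
    exact hT.injective (by rw [hx0, map_zero])
  have hdense : (LinearMap.range L).topologicalClosure = ⊤ := by
    rw [← Submodule.orthogonal_orthogonal_eq_closure, horth,
      Submodule.bot_orthogonal_eq_top]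
  set S := {r : ℝ | ∃ v : V, ‖Tstar v‖ ≤ 1 ∧ r = T u v} with hS
  have h0 : (0 : ℝ) ∈ S := ⟨0, by simp [hzero]⟩
  have hub : ∀ r ∈ S, r ≤ ‖u‖ := by
    rintro r ⟨v, hv1, rfl⟩
    calc T u v = inner ℝ (Tstar v) u := hadj u v
    _ ≤ ‖Tstar v‖ * ‖u‖ := real_inner_le_norm _ _
    _ ≤ 1 * ‖u‖ := by
        exact mul_le_mul_of_nonneg_right hv1 (norm_nonneg u)
    _ = ‖u‖ := one_mul _
  have hbdd : BddAbove S := ⟨‖u‖, hub⟩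
  refine le_antisymm ?_ (Real.sSup_le hub (norm_nonneg u))
  rcases eq_or_ne u 0 with rfl | hu
  · simpa using le_csSup hbdd h0
  have hun : 0 < ‖u‖ := norm_pos_iff.mpr hu
  -- it suffices to beat ‖u‖ - ε for all ε > 0
  refine le_of_forall_sub_le fun ε hε => ?_
  set δ : ℝ := ε / (2 * ‖u‖) with hδdef
  have hδ : 0 < δ := div_pos hε (by positivity)
  -- approximate e := ‖u‖⁻¹ • u by Tstar v
  set e : U := ‖u‖⁻¹ • u with he
  have hemem : e ∈ closure ((LinearMap.range L : Submodule ℝ U) : Set U) := by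
    have : e ∈ (LinearMap.range L).topologicalClosure := by
      rw [hdense]; trivial
    exact this
  rcases Metric.mem_closure_iff.mp hemem δ hδ with ⟨x, hxmem, hdist⟩
  rcases hxmem with ⟨v, rfl⟩
  have hLv : L v = Tstar v := rfl
  rw [hLv] at hdist
  have hne : ‖Tstar v - e‖ < δ := by
    rw [dist_eq_norm] at hdist
    rwa [← norm_neg, neg_sub]
  have hwnorm : ‖Tstar v‖ ≤ 1 + δ := by
    have h1 : ‖e‖ = 1 := by
      rw [he, norm_smul, norm_inv, norm_norm, inv_mul_cancel₀ hun.ne']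
    calc ‖Tstar v‖ ≤ ‖e‖ + ‖Tstar v - e‖ := by
          have := norm_add_le e (Tstar v - e); simpa using this
    _ ≤ 1 + δ := by rw [h1]; linarith [hne.le]
  -- the candidate test element
  refine le_trans ?_ (le_csSup hbdd ⟨(1 + δ)⁻¹ • v, ?_, rfl⟩)
  · -- ‖u‖ - ε ≤ T u ((1+δ)⁻¹ • v)
    have hTv : T u ((1 + δ)⁻¹ • v) = (1 + δ)⁻¹ * inner ℝ (Tstar v) u := by
      rw [map_smul, smul_eq_mul, hadj]
    have hinner : inner ℝ (Tstar v) u ≥ ‖u‖ - δ * ‖u‖ := by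
      have h1 : (inner ℝ e u : ℝ) = ‖u‖ := by
        rw [he, real_inner_smul_left, real_inner_self_eq_norm_mul_norm]
        field_simp
      have h2 : (inner ℝ (Tstar v - e) u : ℝ) ≥ -(δ * ‖u‖) := by
        have := abs_real_inner_le_norm (Tstar v - e) u
        have h3 : ‖Tstar v - e‖ * ‖u‖ ≤ δ * ‖u‖ :=
          mul_le_mul_of_nonneg_right hne.le (norm_nonneg u)
        have := abs_le.mp (this.trans h3)
        linarith [this.1]
      have h4 : (inner ℝ (Tstar v) u : ℝ) = inner ℝ e u + inner ℝ (Tstar v - e) u := by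
        rw [← inner_add_left]; congr 1; abel
      rw [h4, h1]; linarith
    rw [hTv]
    have hpos : (0:ℝ) < 1 + δ := by linarith
    have h5 : (1 + δ)⁻¹ * (‖u‖ - δ * ‖u‖) ≤ (1 + δ)⁻¹ * inner ℝ (Tstar v) u :=
      mul_le_mul_of_nonneg_left hinner (inv_nonneg.mpr hpos.le)
    have hδε : δ * (2 * ‖u‖) = ε := by
      rw [hδdef]; field_simp
    have h6 : ‖u‖ - ε ≤ (‖u‖ - δ * ‖u‖) / (1 + δ) := by
      rw [le_div_iff₀ hpos]
      nlinarith [mul_pos hδ hε]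
    calc ‖u‖ - ε ≤ (‖u‖ - δ * ‖u‖) / (1 + δ) := h6
    _ = (1 + δ)⁻¹ * (‖u‖ - δ * ‖u‖) := by rw [div_eq_inv_mul]
    _ ≤ _ := h5
  · -- ‖Tstar ((1+δ)⁻¹ • v)‖ ≤ 1
    rw [hsmul, norm_smul, norm_inv, Real.norm_eq_abs,
      abs_of_pos (by linarith : (0:ℝ) < 1 + δ)]
    rw [inv_mul_le_iff₀ (by linarith), mul_one]
    exact hwnorm
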